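/- For every integer N ≥ 1 and every complex w ∉ πℤ, the (2N-1)-st derivative of cot satisfies cot^{(2N-1)}(w) = -( E(2N-1, N-1) + 2 ∑_{k=1}^{N-1} E(2N-1, N-k-1) cos(2kw) ) / sin^{2N}(w). -/

import Mathlib

open Complex Polynomial Filter

/-- The Eulerian polynomials, defined by the recurrence
`A 0 = 1`, `A (n+1) = (1 + n*X) * A n + X*(1-X) * (A n)'`. -/
noncomputable def eulerianPoly : ℕ → Polynomial ℤ
  | 0 => 1
  | n + 1 => (1 + Polynomial.C (n : ℤ) * Polynomial.X) * eulerianPoly n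
      + Polynomial.X * (1 - Polynomial.X) * Polynomial.derivative (eulerianPoly n)

/-- The Eulerian numbers `E(n,k)`, coefficients of the Eulerian polynomials. -/
noncomputable def eulerianNum (n k : ℕ) : ℤ := (eulerianPoly n).coeff k

lemma eulerianPoly_one : eulerianPoly 1 = 1 := by simp [eulerianPoly]

lemma eulerianPoly_natDegree_le (n : ℕ) : (eulerianPoly (n+1)).natDegree ≤ n := by
  induction n with
  | zero => simp [eulerianPoly]
  | succ n ih =>
    rw [eulerianPoly]
    apply le_trans (natDegree_add_le _ _)
    apply max_le
    · apply le_trans (natDegree_mul_le)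
      have h1 : (1 + Polynomial.C ((n+1 : ℕ) : ℤ) * Polynomial.X).natDegree ≤ 1 := by
        compute_degree
      omega
    · rcases Nat.eq_zero_or_pos n with rfl | hn
      · have h0 : derivative (eulerianPoly (0+1)) = 0 := by
          show derivative (eulerianPoly 1) = 0
          simp [eulerianPoly]
        rw [h0, mul_zero]
        simp
      · apply le_trans (natDegree_mul_le)
        have h2 : (Polynomial.X * (1 - Polynomial.X) : ℤ[X]).natDegree ≤ 2 := by
          compute_degree
        have h3 := natDegree_derivative_le (eulerianPoly (n+1))
        omega

lemma eulerianPoly_two : eulerianPoly 2 = 1 + Polynomial.X := by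
  show (1 + Polynomial.C ((1:ℕ) : ℤ) * Polynomial.X) * eulerianPoly 1
      + Polynomial.X * (1 - Polynomial.X) * Polynomial.derivative (eulerianPoly 1) = _
  rw [eulerianPoly_one]
  simp

lemma reflect_lin (c : ℤ) : reflect 1 (1 + Polynomial.C c * Polynomial.X) = Polynomial.C c + Polynomial.X := by
  rw [reflect_add, reflect_one, reflect_C_mul, reflect_one_X]
  simp [add_comm]

lemma reflect_XmX : reflect 2 (Polynomial.X * (1 - Polynomial.X) : ℤ[X]) = Polynomial.X - 1 := by
  have h : (Polynomial.X * (1 - Polynomial.X) : ℤ[X]) = Polynomial.X - Polynomial.C 1 * Polynomial.X ^ 2 := by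
    simp; ring
  rw [h, reflect_sub, reflect_C_mul_X_pow,
    show (Polynomial.X : ℤ[X]) = Polynomial.X ^ 1 from (pow_one _).symm, reflect_monomial]
  simp [revAt_le]

lemma eulerianPoly_reflect (n : ℕ) : reflect n (eulerianPoly (n+1)) = eulerianPoly (n+1) := by
  induction n with
  | zero => simp [eulerianPoly]
  | succ n ih =>
    rcases Nat.eq_zero_or_pos n with rfl | hn
    · rw [show (0:ℕ)+1+1 = 2 from rfl, eulerianPoly_two]
      ext i
      rw [coeff_reflect]
      match i with
      | 0 => simp [coeff_one]
      | 1 => simp [coeff_one]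
      | (k+2) => simp [revAt_eq_self_of_lt (by omega : 1 < k+2), coeff_one]
    have hdeg : (eulerianPoly (n+1)).natDegree ≤ n := eulerianPoly_natDegree_le n
    set A := eulerianPoly (n+1) with hA
    have hsym : ∀ i ≤ n, A.coeff (n - i) = A.coeff i := by
      intro i hi
      conv_rhs => rw [← ih]
      rw [coeff_reflect, revAt_le hi]
    have hderdeg : (derivative A).natDegree ≤ n - 1 := by
      have := natDegree_derivative_le A; omega
    have hder : reflect (n-1) (derivative A) = Polynomial.C (n : ℤ) * A - Polynomial.X * derivative A := by
      ext i
      rw [coeff_reflect, coeff_sub, coeff_C_mul]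
      rcases le_or_gt i (n-1) with hi | hi
      · rw [revAt_le hi, coeff_derivative]
        have h1 : n - 1 - i + 1 = n - i := by omega
        rw [h1, hsym i (by omega)]
        rcases Nat.eq_zero_or_pos i with rfl | hip
        · rw [mul_coeff_zero]
          have hc : ((n - 1 - 0 : ℕ) : ℤ) + 1 = (n : ℤ) := by
            have : n - 1 - 0 = n - 1 := rfl
            rw [this]; push_cast [hn]; omega
          rw [hc]
          simp [mul_comm]
        · obtain ⟨j, rfl⟩ := Nat.exists_eq_add_of_le hip
          rw [show 1 + j = j + 1 from by omega, coeff_X_mul, coeff_derivative]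
          have hc : ((n - 1 - (j+1) : ℕ) : ℤ) + 1 = (n : ℤ) - (j+1) := by
            push_cast [show n - 1 - (j+1) = n - (j+2) from by omega]
            omega
          rw [hc]
          ring
      · rw [revAt_eq_self_of_lt hi]
        have hz : (derivative A).coeff i = 0 :=
          coeff_eq_zero_of_natDegree_lt (by omega)
        rw [hz]
        have hi1 : 1 ≤ i := by omega
        obtain ⟨j, rfl⟩ := Nat.exists_eq_add_of_le hi1
        rw [show 1 + j = j + 1 from by omega, coeff_X_mul, coeff_derivative]
        rcases eq_or_lt_of_le (show n ≤ j + 1 from by omega) with he | hlt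
        · subst he; push_cast; ring
        · rw [coeff_eq_zero_of_natDegree_lt (show A.natDegree < j+1 from by omega)]
          ring
    -- main step
    show reflect (n+1) (eulerianPoly (n+1+1)) = _
    rw [show eulerianPoly (n+1+1) =
      (1 + Polynomial.C ((n+1 : ℕ) : ℤ) * Polynomial.X) * A
      + Polynomial.X * (1 - Polynomial.X) * derivative A from rfl]
    rw [reflect_add]
    have e1 : reflect (n+1) ((1 + Polynomial.C ((n+1 : ℕ) : ℤ) * Polynomial.X) * A)
        = (Polynomial.C ((n+1 : ℕ) : ℤ) + Polynomial.X) * A := by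
      have := reflect_mul (1 + Polynomial.C ((n+1 : ℕ) : ℤ) * Polynomial.X) A
        (F := 1) (G := n) (by compute_degree) hdeg
      rw [show 1 + n = n + 1 from by omega] at this
      rw [this, reflect_lin, ih]
    have e2 : reflect (n+1) (Polynomial.X * (1 - Polynomial.X) * derivative A)
        = (Polynomial.X - 1) * (Polynomial.C (n : ℤ) * A - Polynomial.X * derivative A) := by
      have := reflect_mul (Polynomial.X * (1 - Polynomial.X)) (derivative A)
        (F := 2) (G := n - 1) (by compute_degree) hderdeg
      rw [show 2 + (n - 1) = n + 1 from by omega] at this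
      rw [this, reflect_XmX, hder]
    rw [e1, e2]
    push_cast
    rw [show Polynomial.C ((n:ℤ) + 1) = Polynomial.C ((n:ℤ)) + 1 from by rw [C_add, C_1]]
    ring

noncomputable def Q (n : ℕ) : Polynomial ℂ := (eulerianPoly n).map (Int.castRingHom ℂ)

noncomputable def G (n : ℕ) (w : ℂ) : ℂ :=
  (-1)^n * (2*I)^(n+1) * cexp (2*I*w) * (Q n).eval (cexp (2*I*w)) / (cexp (2*I*w) - 1)^(n+1)

lemma Q_succ (n : ℕ) : Q (n+1) = (1 + Polynomial.C ((n:ℂ)) * Polynomial.X) * Q n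
    + Polynomial.X * (1 - Polynomial.X) * Polynomial.derivative (Q n) := by
  unfold Q
  rw [show eulerianPoly (n+1) = (1 + Polynomial.C (n : ℤ) * Polynomial.X) * eulerianPoly n
      + Polynomial.X * (1 - Polynomial.X) * Polynomial.derivative (eulerianPoly n) from rfl]
  simp [Polynomial.map_add, Polynomial.map_mul, Polynomial.map_one, Polynomial.map_X,
    Polynomial.map_C, derivative_map, Polynomial.map_sub]

lemma exp_sub_one (w : ℂ) : cexp (2*I*w) - 1 = cexp (I*w) * (2*I*Complex.sin w) := by
  rw [Complex.sin, show -w*I = -(I*w) from by ring, show w*I = I*w from by ring]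
  have h2 : cexp (2*I*w) = cexp (I*w) * cexp (I*w) := by
    rw [← Complex.exp_add]; ring_nf
  have h3 : cexp (I*w) * cexp (-(I*w)) = 1 := by
    rw [← Complex.exp_add]; simp
  have hI : (I:ℂ)^2 = -1 := I_sq
  linear_combination h2 + (cexp (I*w)^2 - cexp (I*w)*cexp (-(I*w)))*hI + h3

lemma exp_sub_one_ne (w : ℂ) (hs : Complex.sin w ≠ 0) : cexp (2*I*w) - 1 ≠ 0 := by
  rw [exp_sub_one]
  simp [Complex.exp_ne_zero, hs, I_ne_zero]

lemma hasDerivAt_exp2I (w : ℂ) : HasDerivAt (fun z => cexp (2*I*z)) (2*I*cexp (2*I*w)) w := by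
  have h := ((hasDerivAt_id w).const_mul (2*I)).cexp
  simpa [mul_comm] using h

lemma cot_deriv (w : ℂ) (hs : Complex.sin w ≠ 0) :
    HasDerivAt Complex.cot (-(1 / Complex.sin w ^ 2)) w := by
  have h := (Complex.hasDerivAt_cos w).div (Complex.hasDerivAt_sin w) hs
  have he : Complex.cot = fun z => Complex.cos z / Complex.sin z := rfl
  rw [he]
  refine h.congr_deriv ?_
  have hpy := Complex.sin_sq_add_cos_sq w
  rw [show -Complex.sin w * Complex.sin w - Complex.cos w * Complex.cos w = -1 from by
    linear_combination -hpy]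
  ring

lemma main_formula (n : ℕ) : ∀ w : ℂ, Complex.sin w ≠ 0 →
    iteratedDeriv (n+1) Complex.cot w = G (n+1) w := by
  induction n with
  | zero =>
    intro w hs
    rw [iteratedDeriv_one, (cot_deriv w hs).deriv]
    unfold G Q
    have h1 : eulerianPoly 1 = 1 := by simp [eulerianPoly]
    rw [h1]
    simp only [Polynomial.map_one, Polynomial.eval_one]
    rw [exp_sub_one]
    have h2 : cexp (2*I*w) = cexp (I*w) * cexp (I*w) := by
      rw [← Complex.exp_add]; ring_nf
    rw [h2]
    field_simp [Complex.exp_ne_zero, I_ne_zero, hs]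
    ring_nf
  | succ n ih =>
    intro w hs
    have hopen : IsOpen {z : ℂ | Complex.sin z ≠ 0} :=
      isOpen_compl_iff.mpr (isClosed_singleton.preimage Complex.continuous_sin)
    have hev : iteratedDeriv (n+1) Complex.cot =ᶠ[nhds w] G (n+1) := by
      filter_upwards [hopen.mem_nhds hs] with z hz
      exact ih z hz
    rw [iteratedDeriv_succ, hev.deriv_eq]
    -- now compute deriv (G (n+1)) w
    set u := cexp (2*I*w) with hu
    have hune : u - 1 ≠ 0 := exp_sub_one_ne w hs
    have hQe := Q_succ (n+1)
    have hexp := hasDerivAt_exp2I w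
    have heval : HasDerivAt (fun z => (Q (n+1)).eval (cexp (2*I*z)))
        ((Q (n+1)).derivative.eval u * (2*I*u)) w :=
      (Polynomial.hasDerivAt (Q (n+1)) u).comp (h₂ := fun x => (Q (n+1)).eval x) w hexp
    have hnum : HasDerivAt (fun z => (-1)^(n+1) * (2*I)^(n+2) * cexp (2*I*z) * (Q (n+1)).eval (cexp (2*I*z)))
        ((-1)^(n+1) * (2*I)^(n+2) * ((2*I*u) * (Q (n+1)).eval u
          + u * ((Q (n+1)).derivative.eval u * (2*I*u)))) w := by
      have := ((hexp.mul heval).const_mul ((-1)^(n+1) * (2*I)^(n+2) : ℂ))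
      refine (this.congr_deriv rfl).congr_of_eventuallyEq (Filter.Eventually.of_forall fun z => ?_)
      simp only [Pi.mul_apply]; ring
    have hden : HasDerivAt (fun z => (cexp (2*I*z) - 1)^(n+2))
        ((n+2 : ℕ) * (u-1)^(n+1) * (2*I*u)) w := by
      have := (hexp.sub_const 1).pow (n+2)
      exact this
    have hdenne : (u-1)^(n+2) ≠ 0 := pow_ne_zero _ hune
    have hG : HasDerivAt (G (n+1))
        (((-1)^(n+1) * (2*I)^(n+2) * ((2*I*u) * (Q (n+1)).eval u
          + u * ((Q (n+1)).derivative.eval u * (2*I*u))) * (u-1)^(n+2)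
          - (-1)^(n+1) * (2*I)^(n+2) * u * (Q (n+1)).eval u * ((n+2 : ℕ) * (u-1)^(n+1) * (2*I*u)))
          / ((u-1)^(n+2))^2) w := by
      have := hnum.div hden hdenne
      exact this
    rw [hG.deriv]
    unfold G
    rw [hQe]
    simp only [Polynomial.eval_add, Polynomial.eval_mul, Polynomial.eval_one, Polynomial.eval_X,
      Polynomial.eval_sub, Polynomial.eval_C]
    rw [← hu]
    have hcast : ((n+1 : ℕ) : ℂ) = (n : ℂ) + 1 := by push_cast; ring
    field_simp
    push_cast
    ring

lemma sum_center (M : ℕ) (f : ℕ → ℂ) :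
    ∑ j ∈ Finset.range (2*M+1), f j
      = f M + ∑ k ∈ Finset.Icc 1 M, (f (M+k) + f (M-k)) := by
  have hsplit : ∑ j ∈ Finset.range (2*M+1), f j
      = ∑ j ∈ Finset.range M, f j + ∑ j ∈ Finset.Ico M (2*M+1), f j := by
    rw [Finset.range_eq_Ico, ← Finset.sum_Ico_consecutive f (Nat.zero_le M) (by omega), Finset.range_eq_Ico]
  rw [hsplit, Finset.sum_Ico_eq_sum_range]
  have h2 : 2*M+1 - M = M + 1 := by omega
  rw [h2, Finset.sum_range_succ']
  rw [Finset.sum_add_distrib]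
  have e1 : ∑ k ∈ Finset.Icc 1 M, f (M+k) = ∑ i ∈ Finset.range M, f (M + (i+1)) := by
    rw [← Finset.Ico_add_one_right_eq_Icc, Finset.sum_Ico_eq_sum_range]
    rw [show M+1-1 = M from by omega]
    apply Finset.sum_congr rfl
    intro i _
    congr 1
    omega
  have e2 : ∑ k ∈ Finset.Icc 1 M, f (M-k) = ∑ i ∈ Finset.range M, f i := by
    rw [← Finset.Ico_add_one_right_eq_Icc, Finset.sum_Ico_eq_sum_range]
    rw [show M+1-1 = M from by omega]
    rw [← Finset.sum_range_reflect]
    apply Finset.sum_congr rfl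
    intro i hi
    simp only [Finset.mem_range] at hi
    congr 1
    omega
  rw [e1, e2]
  simp only [add_zero]
  ring

theorem cot_iteratedDeriv_odd (N : ℕ) (hN : 1 ≤ N) (w : ℂ)
    (hw : ∀ k : ℤ, w ≠ (k : ℂ) * Real.pi) :
    iteratedDeriv (2 * N - 1) Complex.cot w =
      -(((eulerianNum (2 * N - 1) (N - 1) : ℂ) +
          2 * ∑ k ∈ Finset.Icc 1 (N - 1),
            (eulerianNum (2 * N - 1) (N - k - 1) : ℂ) * Complex.cos (2 * (k : ℂ) * w)) /
        Complex.sin w ^ (2 * N)) := by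
  have hs : Complex.sin w ≠ 0 := by
    rw [Ne, Complex.sin_eq_zero_iff]
    rintro ⟨k, hk⟩; exact hw k hk
  have hmain := main_formula (2*N-2) w hs
  rw [show 2*N-2+1 = 2*N-1 from by omega] at hmain
  rw [hmain]
  unfold G
  rw [show 2*N-1+1 = 2*N from by omega]
  set E := cexp (2*I*w) with hE
  have hEne : E ≠ 0 := Complex.exp_ne_zero _
  set c : ℕ → ℂ := fun j => ((eulerianPoly (2*N-1)).coeff j : ℂ) with hc
  have hdeg : (Q (2*N-1)).natDegree < 2*N-1 := by
    have h1 : (eulerianPoly (2*N-2+1)).natDegree ≤ 2*N-2 := eulerianPoly_natDegree_le _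
    rw [show 2*N-2+1 = 2*N-1 from by omega] at h1
    have h2 : (Q (2*N-1)).natDegree ≤ (eulerianPoly (2*N-1)).natDegree :=
      Polynomial.natDegree_map_le
    omega
  have hQe : (Q (2*N-1)).eval E = ∑ j ∈ Finset.range (2*N-1), c j * E^j := by
    rw [Polynomial.eval_eq_sum_range' hdeg]
    apply Finset.sum_congr rfl
    intro j _
    unfold Q
    rw [Polynomial.coeff_map]
    simp [hc]
  have hsym : ∀ k, k ∈ Finset.Icc 1 (N-1) → c (N-1+k) = c (N-1-k) := by
    intro k hk
    simp only [Finset.mem_Icc] at hk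
    have hr := eulerianPoly_reflect (2*N-2)
    rw [show 2*N-2+1 = 2*N-1 from by omega] at hr
    have h3 := congrArg (fun p => Polynomial.coeff p (N-1+k)) hr
    rw [Polynomial.coeff_reflect, Polynomial.revAt_le (by omega : N-1+k ≤ 2*N-2)] at h3
    simp only [hc]
    rw [← h3, show 2*N-2-(N-1+k) = N-1-k from by omega]
  have hEk : ∀ k, k ∈ Finset.Icc 1 (N-1) →
      E^(N+k) + E^(N-k) = E^N * (2 * Complex.cos (2*(k:ℂ)*w)) := by
    intro k hk
    simp only [Finset.mem_Icc] at hk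
    have h1 : cexp ((2*(k:ℂ)*w) * I) = E^k := by
      rw [show (2*(k:ℂ)*w)*I = ((k:ℕ):ℂ)*(2*I*w) from by ring, Complex.exp_nat_mul]
    have h2 : Complex.cos (2*(k:ℂ)*w) = (E^k + (E^k)⁻¹)/2 := by
      rw [Complex.cos, show -(2*(k:ℂ)*w)*I = -((2*(k:ℂ)*w)*I) from by ring, Complex.exp_neg, h1]
    have h3 : E^(N-k) * E^k = E^N := by rw [← pow_add, Nat.sub_add_cancel (by omega)]
    have h4 : E^(N-k) = E^N * (E^k)⁻¹ := by
      field_simp [← h3]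
      exact h3
    rw [h2, h4, pow_add]
    field_simp
  have hkey : E * (Q (2*N-1)).eval E
      = E^N * (c (N-1) + 2 * ∑ k ∈ Finset.Icc 1 (N-1), c (N-1-k) * Complex.cos (2*(k:ℂ)*w)) := by
    rw [hQe, Finset.mul_sum]
    have hstep : ∀ j, E * (c j * E^j) = c j * E^(j+1) := by
      intro j; rw [pow_succ]; ring
    rw [Finset.sum_congr rfl (fun j _ => hstep j)]
    have hcc := sum_center (N-1) (fun j => c j * E^(j+1))
    rw [show 2*(N-1)+1 = 2*N-1 from by omega] at hcc
    rw [hcc]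

    rw [show N-1+1 = N from by omega]
    have hterm : ∀ k ∈ Finset.Icc 1 (N-1),
        (c (N-1+k) * E^(N-1+k+1) + c (N-1-k) * E^(N-1-k+1))
          = c (N-1-k) * Complex.cos (2*(k:ℂ)*w) * (2 * E^N) := by
      intro k hk
      have hk' := hk
      simp only [Finset.mem_Icc] at hk'
      rw [hsym k hk, show N-1+k+1 = N+k from by omega, show N-1-k+1 = N-k from by omega,
        ← mul_add, hEk k hk]
      ring
    rw [Finset.sum_congr rfl hterm, ← Finset.sum_mul]
    ring
  have hden : (E - 1)^(2*N) = E^N * ((2*I)^(2*N) * Complex.sin w^(2*N)) := by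
    rw [hE, exp_sub_one, mul_pow, mul_pow]
    have : cexp (I*w)^(2*N) = cexp (2*I*w)^N := by
      rw [← Complex.exp_nat_mul, ← Complex.exp_nat_mul]
      congr 1
      push_cast
      ring
    rw [this]
  have hodd : (-1:ℂ)^(2*N-1) = -1 := Odd.neg_one_pow ⟨N-1, by omega⟩
  rw [show (-1:ℂ)^(2*N-1) * (2*I)^(2*N) * E * ((Q (2*N-1)).eval E)
      = (-1:ℂ)^(2*N-1) * (2*I)^(2*N) * (E * (Q (2*N-1)).eval E) from by ring,
    hkey, hden, hodd]
  have h2I : ((2*I)^(2*N) : ℂ) ≠ 0 := pow_ne_zero _ (by simp [I_ne_zero])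
  have hEN : (E^N : ℂ) ≠ 0 := pow_ne_zero _ hEne
  have hsN : (Complex.sin w)^(2*N) ≠ 0 := pow_ne_zero _ hs
  have hnum : ∀ k, (eulerianNum (2*N-1) (N-k-1) : ℂ) = c (N-1-k) := by
    intro k
    simp only [hc, eulerianNum]
    congr 2
    omega
  have hsum : (∑ k ∈ Finset.Icc 1 (N-1),
      (eulerianNum (2*N-1) (N-k-1) : ℂ) * Complex.cos (2*(k:ℂ)*w))
      = ∑ k ∈ Finset.Icc 1 (N-1), c (N-1-k) * Complex.cos (2*(k:ℂ)*w) :=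
    Finset.sum_congr rfl (fun k _ => by rw [hnum k])
  rw [hsum, show (eulerianNum (2*N-1) (N-1) : ℂ) = c (N-1) from rfl]
  field_simp
  ring_nf
  exact congrArg (fun s => -c (N-1) - s * 2) (Finset.sum_congr rfl fun x _ => by ring_nf)
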